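/- Let α ∈ (1,2). Then the series Σ_{k=0}^{∞} q_k^α converges and its sum equals 0. -/

import Mathlib

open scoped BigOperators

/-- The coefficients `g_k^α = (-1)^k * binom(α, k)`, defined recursively. -/
noncomputable def gL (α : ℝ) : ℕ → ℝ
  | 0 => 1
  | (k + 1) => (1 - (α + 1) / ((k : ℝ) + 1)) * gL α k

/-- The Lubich coefficients `q_k^α = (3/2)^α * Σ_{m=0}^{k} 3^{-m} g_m^α g_{k-m}^α`
for `k ≥ 0`, and `q_k^α = 0` for `k < 0`. -/
noncomputable def qL (α : ℝ) (k : ℤ) : ℝ :=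
  if 0 ≤ k then
    (3 / 2 : ℝ) ^ α *
      ∑ m ∈ Finset.range (k.toNat + 1), (3 : ℝ) ^ (-(m : ℤ)) * gL α m * gL α (k.toNat - m)
  else 0

lemma gL_step (α : ℝ) (k : ℕ) : ((k : ℝ) + 1) * gL α (k + 1) = ((k : ℝ) - α) * gL α k := by
  have h : ((k : ℝ) + 1) ≠ 0 := by positivity
  show ((k : ℝ) + 1) * ((1 - (α + 1) / ((k : ℝ) + 1)) * gL α k) = ((k : ℝ) - α) * gL α k
  field_simp
  ring

lemma gL_succ_rel (α : ℝ) (n : ℕ) : ((n : ℝ) + 1) * gL α (n + 1) = -α * gL (α - 1) n := by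
  induction n with
  | zero => simpa [gL] using gL_step α 0
  | succ n ih =>
    have h : ((n : ℝ) + 1) ≠ 0 := by positivity
    have s1 := gL_step α (n + 1)
    have s2 := gL_step (α - 1) n
    have key : ((n : ℝ) + 1) * ((((n : ℝ) + 1) + 1) * gL α (n + 1 + 1))
        = ((n : ℝ) + 1) * (-α * gL (α - 1) (n + 1)) := by
      push_cast at s1
      linear_combination ((n : ℝ) + 1) * s1 + ((n : ℝ) + 1 - α) * ih + α * s2
    have := mul_left_cancel₀ h key
    push_cast
    linarith [this]

lemma sum_gL (α : ℝ) (n : ℕ) : ∑ k ∈ Finset.range (n + 1), gL α k = gL (α - 1) n := by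
  induction n with
  | zero => simp [gL]
  | succ n ih =>
    rw [Finset.sum_range_succ, ih]
    have h := gL_succ_rel α n
    have s2 := gL_step (α - 1) n
    have hne : ((n : ℝ) + 1) ≠ 0 := by positivity
    have key : ((n : ℝ) + 1) * (gL (α - 1) n + gL α (n + 1))
        = ((n : ℝ) + 1) * gL (α - 1) (n + 1) := by
      linear_combination h - s2
    have := mul_left_cancel₀ hne key
    linarith [this]

lemma abs_gL_le (β : ℝ) (h0 : 0 ≤ β) (h1 : β ≤ 1) (n : ℕ) :
    |gL β (n + 1)| ≤ 1 / ((n : ℝ) + 1) := by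
  induction n with
  | zero =>
    have e : gL β 1 = -β := by simp [gL]
    rw [e, abs_neg, abs_of_nonneg h0]
    norm_num
    linarith
  | succ n ih =>
    have hp1 : (0 : ℝ) < (n : ℝ) + 1 := by positivity
    have hp2 : (0 : ℝ) < ((n : ℝ) + 1) + 1 := by positivity
    have hunf : gL β (n + 1 + 1) = (1 - (β + 1) / (((n : ℝ) + 1) + 1)) * gL β (n + 1) := by
      show (1 - (β + 1) / ((↑(n + 1) : ℝ) + 1)) * gL β (n + 1) = _
      push_cast
      ring_nf
    have hd : (β + 1) / (((n : ℝ) + 1) + 1) ≤ 1 := by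
      rw [div_le_one hp2]; linarith
    have hd2 : 1 / (((n : ℝ) + 1) + 1) ≤ (β + 1) / (((n : ℝ) + 1) + 1) := by
      gcongr; linarith
    calc |gL β (n + 1 + 1)|
        = |1 - (β + 1) / (((n : ℝ) + 1) + 1)| * |gL β (n + 1)| := by rw [hunf, abs_mul]
      _ ≤ (1 - 1 / (((n : ℝ) + 1) + 1)) * (1 / ((n : ℝ) + 1)) := by
          apply mul_le_mul _ ih (abs_nonneg _) _
          · rw [abs_of_nonneg (by linarith)]
            linarith
          · have : 1 / (((n : ℝ) + 1) + 1) ≤ 1 := by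
              rw [div_le_one hp2]; linarith
            linarith
      _ = 1 / (((n : ℝ) + 1) + 1) := by field_simp; ring
      _ = 1 / ((↑(n + 1) : ℝ) + 1) := by push_cast; ring

lemma gL_nonneg (α : ℝ) (h1 : 1 < α) (h2 : α < 2) (n : ℕ) : 0 ≤ gL α (n + 2) := by
  induction n with
  | zero =>
    have e : gL α 2 = α * (α - 1) / 2 := by
      simp [gL]
      ring
    rw [e]
    nlinarith
  | succ n ih =>
    have hunf : gL α (n + 2 + 1) = (1 - (α + 1) / (((n : ℝ) + 2) + 1)) * gL α (n + 2) := by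
      show (1 - (α + 1) / ((↑(n + 2) : ℝ) + 1)) * gL α (n + 2) = _
      push_cast; ring_nf
    rw [show n + 1 + 2 = n + 2 + 1 from rfl, hunf]
    apply mul_nonneg _ ih
    have hp : (0 : ℝ) < ((n : ℝ) + 2) + 1 := by positivity
    have : (α + 1) / (((n : ℝ) + 2) + 1) ≤ 1 := by
      rw [div_le_one hp]; linarith
    linarith

lemma sum_gL_shift (α : ℝ) (n : ℕ) :
    ∑ i ∈ Finset.range n, gL α (i + 2) = gL (α - 1) (n + 1) - 1 + α := by
  induction n with
  | zero =>
    simp [gL]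
  | succ n ih =>
    rw [Finset.sum_range_succ, ih]
    have e1 := sum_gL α (n + 1)
    have e2 := sum_gL α (n + 2)
    rw [Finset.sum_range_succ] at e2
    rw [show n + 1 + 1 = n + 2 from rfl] at *
    linarith [e1, e2]

lemma summable_gL (α : ℝ) (h1 : 1 < α) (h2 : α < 2) : Summable (gL α) := by
  have hsub : Summable (fun i => gL α (i + 2)) := by
    apply summable_of_sum_range_le (c := α) (fun i => gL_nonneg α h1 h2 i)
    intro n
    rw [sum_gL_shift]
    have habs := abs_gL_le (α - 1) (by linarith) (by linarith) n
    have h3 : gL (α - 1) (n + 1) ≤ 1 := by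
      have hb : (1 : ℝ) / ((n : ℝ) + 1) ≤ 1 := by
        rw [div_le_one (by positivity)]
        linarith [Nat.cast_nonneg (α := ℝ) n]
      calc gL (α - 1) (n + 1) ≤ |gL (α - 1) (n + 1)| := le_abs_self _
        _ ≤ _ := habs
        _ ≤ 1 := hb
    linarith
  exact (_root_.summable_nat_add_iff 2).mp hsub

lemma summable_norm_gL (α : ℝ) (h1 : 1 < α) (h2 : α < 2) :
    Summable (fun k => ‖gL α k‖) := by
  apply (_root_.summable_nat_add_iff 2).mp
  have : (fun i => ‖gL α (i + 2)‖) = fun i => gL α (i + 2) := by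
    funext i
    rw [Real.norm_eq_abs, abs_of_nonneg (gL_nonneg α h1 h2 i)]
  rw [this]
  exact ((_root_.summable_nat_add_iff 2).mpr (summable_gL α h1 h2))

lemma tendsto_gL_zero (α : ℝ) (h1 : 1 < α) (h2 : α < 2) :
    Filter.Tendsto (fun n : ℕ => gL (α - 1) n) Filter.atTop (nhds 0) := by
  have h : Filter.Tendsto (fun n : ℕ => 1 / ((n : ℝ) + 1)) Filter.atTop (nhds 0) :=
    tendsto_one_div_add_atTop_nhds_zero_nat
  have h2 : Filter.Tendsto (fun n : ℕ => gL (α - 1) (n + 1)) Filter.atTop (nhds 0) := by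
    apply squeeze_zero_norm _ h
    intro n
    simpa using abs_gL_le (α - 1) (by linarith) (by linarith) n
  exact (Filter.tendsto_add_atTop_iff_nat 1).mp h2

lemma hasSum_gL_zero (α : ℝ) (h1 : 1 < α) (h2 : α < 2) : HasSum (gL α) 0 := by
  have hs := (summable_gL α h1 h2).hasSum
  have ht := hs.tendsto_sum_nat
  have ht2 : Filter.Tendsto (fun n : ℕ => ∑ k ∈ Finset.range n, gL α k)
      Filter.atTop (nhds 0) := by
    rw [← Filter.tendsto_add_atTop_iff_nat 1]
    have : (fun n : ℕ => ∑ k ∈ Finset.range (n + 1), gL α k) = fun n => gL (α - 1) n := by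
      funext n; exact sum_gL α n
    rw [this]
    exact tendsto_gL_zero α h1 h2
  have := tendsto_nhds_unique ht ht2
  rwa [this] at hs

/-- The series `Σ_{k=0}^∞ q_k^α` converges (as a limit of partial sums) with sum `0`. -/
theorem stmt1 (α : ℝ) (h1 : 1 < α) (h2 : α < 2) :
    Filter.Tendsto (fun n : ℕ => ∑ k ∈ Finset.range n, qL α (k : ℤ))
      Filter.atTop (nhds 0) := by
  set f : ℕ → ℝ := fun m => (3 : ℝ) ^ (-(m : ℤ)) * gL α m with hf_def
  have hfn : Summable (fun m => ‖f m‖) := by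
    apply Summable.of_nonneg_of_le (fun m => norm_nonneg _) _ (summable_norm_gL α h1 h2)
    intro m
    rw [hf_def]
    simp only [norm_mul]
    have h3 : ‖(3 : ℝ) ^ (-(m : ℤ))‖ ≤ 1 := by
      rw [Real.norm_eq_abs, abs_of_nonneg (by positivity)]
      rw [zpow_neg]
      have hone : (1 : ℝ) ≤ 3 ^ (m : ℤ) := one_le_zpow₀ (by norm_num) (by positivity)
      exact inv_le_one_of_one_le₀ hone
    calc ‖(3 : ℝ) ^ (-(m : ℤ))‖ * ‖gL α m‖ ≤ 1 * ‖gL α m‖ :=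
        mul_le_mul_of_nonneg_right h3 (norm_nonneg _)
      _ = ‖gL α m‖ := one_mul _
  have hgn := summable_norm_gL α h1 h2
  have hprod := hasSum_sum_range_mul_of_summable_norm (f := f) (g := gL α) hfn hgn
  have hts : ∑' n, gL α n = 0 := (hasSum_gL_zero α h1 h2).tsum_eq
  rw [hts, mul_zero] at hprod
  have hq : (fun n : ℕ => qL α (n : ℤ)) =
      fun n : ℕ => (3 / 2 : ℝ) ^ α * ∑ k ∈ Finset.range (n + 1), f k * gL α (n - k) := by
    funext n
    rw [qL, if_pos (Int.natCast_nonneg n), Int.toNat_natCast]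
  have hfinal : HasSum (fun n : ℕ => qL α (n : ℤ)) 0 := by
    rw [hq]
    simpa using hprod.mul_left ((3 / 2 : ℝ) ^ α)
  exact hfinal.tendsto_sum_nat
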